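/- Let $h > 0$ and let $a : (-\infty, t_{\max}) \to \mathbb{R}_{>0}$ be continuous with $(a(t) - e^{ht})/e^{ht} \to 0$ as $t \to -\infty$. Define $\Theta(t) = 1/a(t) - e^{-ht}$. Then $\Theta(t)/e^{-ht} \to 0$ as $t \to -\infty$, and moreover $e^{ht} \int_t^{t_\mathrm{L}} \Theta(\tilde t)\, d\tilde t \to 0$ as $t \to -\infty$ for any fixed $t_\mathrm{L} < t_{\max}$. -/

import Mathlib

open Real Filter intervalIntegral

/-- Key estimate for continuous extendibility: if `a(t) = e^{ht} + o(e^{ht})` as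
`t → -∞`, then `Θ := 1/a - e^{-ht}` is `o(e^{-ht})` and
`e^{ht} ∫_t^{tL} Θ → 0` as `t → -∞`. -/
theorem theta_estimate
    (a : ℝ → ℝ) (tmax h : ℝ) (hh : 0 < h)
    (ha_cont : ContinuousOn a (Set.Iio tmax))
    (ha_pos : ∀ t ∈ Set.Iio tmax, 0 < a t)
    (ha_asym : Tendsto (fun t => (a t - Real.exp (h * t)) / Real.exp (h * t))
      atBot (nhds 0))
    (Θ : ℝ → ℝ) (hΘ : Θ = fun t => 1 / a t - Real.exp (-(h * t))) :
    Tendsto (fun t => Θ t / Real.exp (-(h * t))) atBot (nhds 0) ∧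
      ∀ tL < tmax,
        Tendsto (fun t => Real.exp (h * t) * ∫ s in t..tL, Θ s)
          atBot (nhds 0) := by
  have key : ∀ t : ℝ, Θ t / Real.exp (-(h * t)) = (a t / Real.exp (h * t))⁻¹ - 1 := by
    intro t
    rw [hΘ, inv_div]
    have he : Real.exp (h * t) ≠ 0 := Real.exp_ne_zero _
    simp only [Real.exp_neg]
    rw [div_eq_mul_inv, inv_inv, sub_mul, one_div_mul_eq_div, inv_mul_cancel₀ he]
  have hg : Tendsto (fun t => a t / Real.exp (h * t)) atBot (nhds 1) := by
    have h2 : Tendsto (fun t => (a t - Real.exp (h * t)) / Real.exp (h * t) + 1)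
        atBot (nhds (0 + 1)) := ha_asym.add tendsto_const_nhds
    rw [zero_add] at h2
    refine h2.congr fun t => ?_
    have he : Real.exp (h * t) ≠ 0 := Real.exp_ne_zero _
    field_simp
    ring
  have part1 : Tendsto (fun t => Θ t / Real.exp (-(h * t))) atBot (nhds 0) := by
    have hinv : Tendsto (fun t => (a t / Real.exp (h * t))⁻¹) atBot (nhds 1) := by
      simpa using hg.inv₀ one_ne_zero
    have h3 := hinv.sub (tendsto_const_nhds (x := (1:ℝ)))
    rw [sub_self] at h3
    exact h3.congr fun t => (key t).symm
  refine ⟨part1, ?_⟩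
  intro tL htL
  -- continuity of Θ on Iio tmax
  have hΘcont : ContinuousOn Θ (Set.Iio tmax) := by
    rw [hΘ]
    exact (continuousOn_const.div ha_cont fun t ht => (ha_pos t ht).ne').sub
      (Real.continuous_exp.comp ((continuous_const.mul continuous_id).neg)).continuousOn
  have hint : ∀ u v : ℝ, u ≤ tL → v ≤ tL → IntervalIntegrable Θ MeasureTheory.volume u v := by
    intro u v hu hv
    refine (hΘcont.mono ?_).intervalIntegrable
    intro x hx
    have hx2 : x ≤ max u v := hx.2
    exact lt_of_le_of_lt (le_trans hx2 (max_le hu hv)) htL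
  have hExpInt : ∀ u v : ℝ, (∫ s in u..v, Real.exp (-(h * s)))
      = (Real.exp (-(h * u)) - Real.exp (-(h * v))) / h := by
    intro u v
    have hd : ∀ s : ℝ, HasDerivAt (fun s => -(Real.exp (-(h * s)) / h))
        (Real.exp (-(h * s))) s := by
      intro s
      have h1 : HasDerivAt (fun s : ℝ => -(h * s)) (-h) s := by
        have := ((hasDerivAt_id s).const_mul h).neg
        rw [mul_one] at this
        exact this
      have h2 : HasDerivAt (fun s : ℝ => Real.exp (-(h * s)))
          (Real.exp (-(h * s)) * -h) s := h1.exp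
      have h3 := (h2.div_const h).neg
      have h4 : -(Real.exp (-(h * s)) * -h / h) = Real.exp (-(h * s)) := by
        field_simp
      rwa [h4] at h3
    rw [intervalIntegral.integral_eq_sub_of_hasDerivAt (fun s _ => hd s)
      ((Real.continuous_exp.comp ((continuous_const.mul continuous_id).neg)).continuousOn.intervalIntegrable)]
    ring
  rw [NormedAddCommGroup.tendsto_nhds_zero]
  intro ε hε
  set c : ℝ := ε * h / 2 with hc
  have hcpos : 0 < c := by positivity
  obtain ⟨T0, hT0⟩ : ∃ T0, ∀ t ≤ T0, |Θ t| ≤ c * Real.exp (-(h * t)) := by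
    have := (Metric.tendsto_nhds.mp part1) c hcpos
    rw [eventually_atBot] at this
    obtain ⟨T0, hT0⟩ := this
    refine ⟨T0, fun t ht => ?_⟩
    have h1 := (hT0 t ht).le
    rw [Real.dist_eq, sub_zero, abs_div, abs_of_pos (Real.exp_pos _),
      div_le_iff₀ (Real.exp_pos _)] at h1
    linarith
  set T : ℝ := min T0 tL with hT
  set C : ℝ := ∫ s in T..tL, Θ s with hC
  have hBtend : Tendsto (fun t => Real.exp (h * t) * C) atBot (nhds 0) := by
    have hhb : Tendsto (fun t : ℝ => h * t) atBot atBot :=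
      (tendsto_id (α := ℝ)).const_mul_atBot hh
    have := (Real.tendsto_exp_atBot.comp hhb).mul_const C
    simpa using this
  have hB2 : ∀ᶠ t in atBot, |Real.exp (h * t) * C| < ε / 2 := by
    have := (Metric.tendsto_nhds.mp hBtend) (ε / 2) (by positivity)
    refine this.mono fun t ht => ?_
    rwa [Real.dist_eq, sub_zero] at ht
  filter_upwards [eventually_le_atBot T, hB2] with t htT hB
  have htL' : t ≤ T := htT
  have hTtL : T ≤ tL := min_le_right _ _
  -- split the integral
  have hsplit : (∫ s in t..tL, Θ s) = (∫ s in t..T, Θ s) + C := by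
    rw [hC]
    exact (intervalIntegral.integral_add_adjacent_intervals (hint t T (le_trans htT hTtL) hTtL) (hint T tL hTtL le_rfl)).symm
  -- bound the first piece
  have hbound : ∀ s ∈ Set.Icc t T, |Θ s| ≤ c * Real.exp (-(h * s)) :=
    fun s hs => hT0 s (le_trans hs.2 (min_le_left _ _))
  have habs : |∫ s in t..T, Θ s| ≤ c * (Real.exp (-(h * t)) - Real.exp (-(h * T))) / h := by
    calc |∫ s in t..T, Θ s| ≤ ∫ s in t..T, |Θ s| := by
          simpa using intervalIntegral.abs_integral_le_integral_abs htT
      _ ≤ ∫ s in t..T, c * Real.exp (-(h * s)) := by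
          exact intervalIntegral.integral_mono_on htT (hint t T (le_trans htT hTtL) hTtL).abs
            ((continuous_const.mul (Real.continuous_exp.comp
              ((continuous_const.mul continuous_id).neg))).intervalIntegrable t T) hbound
      _ = c * (Real.exp (-(h * t)) - Real.exp (-(h * T))) / h := by
          rw [intervalIntegral.integral_const_mul, hExpInt]
          ring
  have hfirst : |Real.exp (h * t) * ∫ s in t..T, Θ s| ≤ ε / 2 := by
    rw [abs_mul, abs_of_pos (Real.exp_pos _)]
    have h1 : Real.exp (h * t) * |∫ s in t..T, Θ s|
        ≤ Real.exp (h * t) * (c * (Real.exp (-(h * t)) - Real.exp (-(h * T))) / h) :=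
      mul_le_mul_of_nonneg_left habs (Real.exp_pos _).le
    have h2 : Real.exp (h * t) * (c * (Real.exp (-(h * t)) - Real.exp (-(h * T))) / h)
        ≤ Real.exp (h * t) * (c * Real.exp (-(h * t)) / h) := by
      apply mul_le_mul_of_nonneg_left _ (Real.exp_pos _).le
      apply div_le_div_of_nonneg_right _ hh.le
      nlinarith [Real.exp_pos (-(h * T)), hcpos]
    have h3 : Real.exp (h * t) * (c * Real.exp (-(h * t)) / h) = ε / 2 := by
      rw [Real.exp_neg]
      field_simp [hc]
      ring
    linarith
  calc ‖Real.exp (h * t) * ∫ s in t..tL, Θ s‖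
      = |Real.exp (h * t) * (∫ s in t..T, Θ s) + Real.exp (h * t) * C| := by
        rw [Real.norm_eq_abs, hsplit, mul_add]
    _ ≤ |Real.exp (h * t) * ∫ s in t..T, Θ s| + |Real.exp (h * t) * C| := abs_add_le _ _
    _ < ε / 2 + ε / 2 := by
        exact add_lt_add_of_le_of_lt hfirst hB
    _ = ε := by ring
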